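/- arXiv:1702.07159 — 2 statements merged into one kernel-verified Lean document; each statement's English description precedes it below -/
import Mathlib

section
/- Let ϑ ∈ (0,1), α ∈ (0,1) and R₀ > 0, and set λ₀ := exp(exp(ϑ^(−1/α))) and ω(r) := ϑ^(−1) · [log(log(λ₀R₀/r))]^(−α) for r ∈ (0, R₀]. Define recursively R_{j+1} := exp(−(ϑ/α)·[ϑ·ω(R_j)]^(−1/α)) · R_j for j ∈ ℕ₀, starting from R₀. Then ω(R₀) = 1 and, for every j ∈ ℕ₀, ω(R_{j+1}) ≥ ω(R_j) · (1 − ϑ·exp(−[ϑ·ω(R_j)]^(−1/α))). -/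
/-- The modulus of continuity `ω(r) = ϑ⁻¹ [log(log(λ₀R₀/r))]^(−α)`
with `λ₀ = exp(exp(ϑ^(−1/α)))`. -/
noncomputable def omegaMod (ϑ α R₀ r : ℝ) : ℝ :=
  ϑ⁻¹ * (Real.log (Real.log (Real.exp (Real.exp (ϑ ^ (-1 / α))) * R₀ / r))) ^ (-α)

/-- Claim 4.2 of the paper: the sequence `ω_j := ω(R_j)` satisfies the recursive
lower bound `ω(R_{j+1}) ≥ ω(R_j)(1 − ϑ exp(−[ϑω(R_j)]^(−1/α)))`, together with the
normalization `ω(R₀) = 1`. -/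
theorem omegaMod_recursive_lower_bound
    (ϑ α R₀ : ℝ) (hϑ : ϑ ∈ Set.Ioo (0 : ℝ) 1) (hα : α ∈ Set.Ioo (0 : ℝ) 1)
    (hR₀ : 0 < R₀)
    (R : ℕ → ℝ) (hR0 : R 0 = R₀)
    (hRrec : ∀ j : ℕ,
      R (j + 1) = Real.exp (-(ϑ / α) * (ϑ * omegaMod ϑ α R₀ (R j)) ^ (-1 / α)) * R j) :
    omegaMod ϑ α R₀ (R 0) = 1 ∧
      ∀ j : ℕ,
        omegaMod ϑ α R₀ (R j) *
            (1 - ϑ * Real.exp (-(ϑ * omegaMod ϑ α R₀ (R j)) ^ (-1 / α))) ≤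
          omegaMod ϑ α R₀ (R (j + 1)) := by
  obtain ⟨hϑ0, hϑ1⟩ := hϑ
  obtain ⟨hα0, hα1⟩ := hα
  set c : ℝ := ϑ ^ (-1 / α) with hcdef
  have hc1 : 1 < c := by
    rw [hcdef]
    exact (Real.one_lt_rpow_iff_of_pos hϑ0).2
      (Or.inr ⟨hϑ1, div_neg_of_neg_of_pos (by norm_num) hα0⟩)
  have hc0 : 0 < c := lt_trans one_pos hc1
  set Λ : ℝ := Real.exp (Real.exp c) with hΛdef
  set A : ℝ → ℝ := fun r => Real.log (Real.log (Λ * R₀ / r)) with hAdef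
  have hAkey : ∀ r : ℝ, 0 < r → r ≤ R₀ → c ≤ A r ∧ Real.exp c ≤ Real.log (Λ * R₀ / r) := by
    intro r hr hrR
    have h1 : Λ ≤ Λ * R₀ / r := by
      rw [mul_div_assoc]
      nth_rewrite 1 [← mul_one Λ]
      have : (1 : ℝ) ≤ R₀ / r := (one_le_div hr).2 hrR
      nlinarith [Real.exp_pos (Real.exp c)]
    have hΛpos : 0 < Λ := Real.exp_pos _
    have h2 : Real.exp c ≤ Real.log (Λ * R₀ / r) := by
      calc Real.exp c = Real.log Λ := by rw [hΛdef, Real.log_exp]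
        _ ≤ Real.log (Λ * R₀ / r) := Real.log_le_log hΛpos h1
    refine ⟨?_, h2⟩
    calc c = Real.log (Real.exp c) := (Real.log_exp c).symm
      _ ≤ A r := Real.log_le_log (Real.exp_pos c) h2
  have hω : ∀ r : ℝ, ϑ * omegaMod ϑ α R₀ r = (A r) ^ (-α) := by
    intro r
    rw [omegaMod, ← mul_assoc, mul_inv_cancel₀ hϑ0.ne', one_mul]
  have hωeq : ∀ r : ℝ, omegaMod ϑ α R₀ r = ϑ⁻¹ * (A r) ^ (-α) := by
    intro r
    rw [← hω, ← mul_assoc, inv_mul_cancel₀ hϑ0.ne', one_mul]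
  have hpow : ∀ r : ℝ, 0 < r → r ≤ R₀ →
      (ϑ * omegaMod ϑ α R₀ r) ^ (-1 / α) = A r := by
    intro r hr hrR
    have hA0 : 0 < A r := lt_of_lt_of_le hc0 (hAkey r hr hrR).1
    rw [hω, ← Real.rpow_mul hA0.le]
    have : -α * (-1 / α) = 1 := by field_simp
    rw [this, Real.rpow_one]
  have hinv : ∀ j, 0 < R j ∧ R j ≤ R₀ := by
    intro j
    induction j with
    | zero => exact ⟨hR0 ▸ hR₀, hR0.le⟩
    | succ n ih =>
      obtain ⟨h1, h2⟩ := ih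
      rw [hRrec n, hpow _ h1 h2]
      have hA0 : 0 < A (R n) := lt_of_lt_of_le hc0 (hAkey _ h1 h2).1
      constructor
      · positivity
      · have : Real.exp (-(ϑ / α) * A (R n)) ≤ 1 := by
          rw [Real.exp_le_one_iff]
          have : 0 < ϑ / α := by positivity
          nlinarith
        nlinarith
  constructor
  · rw [hR0, omegaMod, mul_div_assoc, div_self hR₀.ne', mul_one, Real.log_exp,
      Real.log_exp, ← Real.rpow_mul hϑ0.le]
    have : -1 / α * -α = 1 := by field_simp
    rw [this, Real.rpow_one, inv_mul_cancel₀ hϑ0.ne']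
  · intro j
    obtain ⟨h1, h2⟩ := hinv j
    obtain ⟨h1', h2'⟩ := hinv (j + 1)
    rw [hpow _ h1 h2, hωeq (R j), hωeq (R (j + 1))]
    have hAc := (hAkey _ h1 h2).1
    have hlog := (hAkey _ h1 h2).2
    have hA0 : 0 < A (R j) := lt_of_lt_of_le hc0 hAc
    set a : ℝ := A (R j) with hadef
    have hΛpos : 0 < Λ := Real.exp_pos _
    have hlogpos : 0 < Real.log (Λ * R₀ / R j) := lt_of_lt_of_le (Real.exp_pos c) hlog
    have hexp_a : Real.exp a = Real.log (Λ * R₀ / R j) := by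
      rw [hadef, hAdef, Real.exp_log hlogpos]
    have hRnext : R (j + 1) = Real.exp (-(ϑ / α) * a) * R j := by
      rw [hRrec j, hpow _ h1 h2]
    have hAnext : A (R (j + 1)) = Real.log (Real.exp a + (ϑ / α) * a) := by
      have hx : Λ * R₀ / R (j + 1) = Real.exp ((ϑ / α) * a) * (Λ * R₀ / R j) := by
        rw [hRnext, neg_mul, Real.exp_neg]
        field_simp
      show Real.log (Real.log (Λ * R₀ / R (j + 1))) = _
      rw [hx, Real.log_mul (Real.exp_ne_zero _) (by positivity), Real.log_exp, hexp_a]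
      ring_nf
    set s : ℝ := (ϑ / α) * Real.exp (-a) with hsdef
    have hs0 : 0 < s := by positivity
    have hAle : A (R (j + 1)) ≤ a * (1 + s) := by
      rw [hAnext]
      have e1 : Real.exp a + (ϑ / α) * a = Real.exp a * (1 + s * a) := by
        rw [hsdef, Real.exp_neg]
        field_simp
      rw [e1, Real.log_mul (Real.exp_ne_zero _) (by positivity), Real.log_exp]
      have := Real.log_le_sub_one_of_pos (x := 1 + s * a) (by positivity)
      nlinarith
    have hA'pos : a ≤ A (R (j + 1)) := by
      rw [hAnext]
      calc a = Real.log (Real.exp a) := (Real.log_exp a).symm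
        _ ≤ _ := Real.log_le_log (Real.exp_pos a) (le_add_of_nonneg_right (by positivity))
    have step1 : (a * (1 + s)) ^ (-α) ≤ (A (R (j + 1))) ^ (-α) :=
      Real.rpow_le_rpow_of_nonpos (lt_of_lt_of_le hA0 hA'pos) hAle (by linarith)
    have step2 : (a * (1 + s)) ^ (-α) = a ^ (-α) * (1 + s) ^ (-α) :=
      Real.mul_rpow hA0.le (by positivity)
    have step3 : 1 - α * s ≤ (1 + s) ^ (-α) := by
      have hb : (1 + s) ^ α ≤ 1 + α * s :=
        rpow_one_add_le_one_add_mul_self (by linarith) hα0.le hα1.le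
      have hpos : (0 : ℝ) < (1 + s) ^ α := Real.rpow_pos_of_pos (by linarith) _
      rw [Real.rpow_neg (by linarith)]
      nlinarith [mul_le_mul_of_nonneg_left hb (inv_pos.mpr hpos).le,
        mul_inv_cancel₀ hpos.ne', sq_nonneg (α * s), mul_pos hα0 hs0]
    have h4 : ϑ * Real.exp (-a) = α * s := by
      rw [hsdef]; field_simp
    rw [h4, mul_assoc]
    refine mul_le_mul_of_nonneg_left ?_ (inv_nonneg.2 hϑ0.le)
    calc a ^ (-α) * (1 - α * s) ≤ a ^ (-α) * (1 + s) ^ (-α) :=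
          mul_le_mul_of_nonneg_left step3 (Real.rpow_nonneg hA0.le _)
      _ = (a * (1 + s)) ^ (-α) := step2.symm
      _ ≤ _ := step1
end

section
/- Let p ≥ 2, τ ∈ (0,1), ϑ ∈ (0,1), α ∈ (0,1) and R₀ > 0, set λ₀ := exp(exp(ϑ^(−1/α))) and ω(r) := ϑ^(−1) · [log(log(λ₀R₀/r))]^(−α) for r ∈ (0, R₀], and define ω̃(r) := τ·ω(r)·exp(−(τ·ω(r))^(−1/α)). Then for every γ ∈ (0,1) there exists a constant c ≥ 1, depending on p, τ, ϑ, α and γ but not on R₀, such that ω̃(r)^(1−p) ≤ c·(R₀/r)^(pγ) for all r ∈ (0, R₀]. -/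
/-- The intrinsic quantity `ω̃(r) = τ ω(r) exp(−(τω(r))^(−1/α))`. -/
noncomputable def omegaTilde (τ ϑ α R₀ r : ℝ) : ℝ :=
  τ * omegaMod ϑ α R₀ r * Real.exp (-(τ * omegaMod ϑ α R₀ r) ^ (-1 / α))

/-- The power bound used in the proof of Theorem 1.2 of the paper: for every
`γ ∈ (0,1)` there is a constant `c ≥ 1` (independent of `R₀`) with
`ω̃(r)^(1−p) ≤ c (R₀/r)^(pγ)` for all `r ∈ (0,R₀]`. -/
theorem omegaTilde_power_bound (p τ ϑ α γ : ℝ)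
    (hp : 2 ≤ p) (hτ : τ ∈ Set.Ioo (0 : ℝ) 1)
    (hϑ : ϑ ∈ Set.Ioo (0 : ℝ) 1) (hα : α ∈ Set.Ioo (0 : ℝ) 1)
    (hγ : γ ∈ Set.Ioo (0 : ℝ) 1) :
    ∃ c : ℝ, 1 ≤ c ∧ ∀ R₀ : ℝ, 0 < R₀ → ∀ r ∈ Set.Ioc (0 : ℝ) R₀,
      omegaTilde τ ϑ α R₀ r ^ (1 - p) ≤ c * (R₀ / r) ^ (p * γ) := by
  obtain ⟨hτ0, hτ1⟩ := hτ
  obtain ⟨hϑ0, hϑ1⟩ := hϑ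
  obtain ⟨hα0, hα1⟩ := hα
  obtain ⟨hγ0, hγ1⟩ := hγ
  have hp1 : (1:ℝ) ≤ p - 1 := by linarith
  set A : ℝ := ϑ ^ (-1 / α) with hA
  set B : ℝ := (τ / ϑ) ^ (-1 / α) with hB
  have hτϑ : 0 < τ / ϑ := div_pos hτ0 hϑ0
  have hB0 : 0 < B := Real.rpow_pos_of_pos hτϑ _
  set K : ℝ := (p - 1) * (1 + B) with hK
  have hK0 : 0 < K := by
    have : (0:ℝ) < 1 + B := by linarith
    nlinarith
  set ε : ℝ := p * γ / K with hε
  have hε0 : 0 < ε := div_pos (mul_pos (by linarith) hγ0) hK0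
  set C₀ : ℝ := (τ / ϑ) ^ (1 - p) with hC₀
  have hC₀0 : 0 < C₀ := Real.rpow_pos_of_pos hτϑ _
  set D : ℝ := Real.exp A + ε⁻¹ with hD
  have hD1 : 1 ≤ D := by
    have h1 : 1 ≤ Real.exp A := Real.one_le_exp (Real.rpow_nonneg hϑ0.le _)
    have h2 : 0 < ε⁻¹ := inv_pos.mpr hε0
    rw [hD]; linarith
  have hD0 : 0 < D := lt_of_lt_of_le one_pos hD1
  have hA1 : 1 < A := by
    rw [hA, Real.one_lt_rpow_iff_of_pos hϑ0]
    right
    constructor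
    · exact hϑ1
    · rw [neg_div]
      exact neg_neg_iff_pos.mpr (by positivity)
  refine ⟨max 1 (C₀ * D ^ K), le_max_left _ _, ?_⟩
  intro R₀ hR₀ r hr
  obtain ⟨hr0, hrR⟩ := hr
  set t : ℝ := R₀ / r with ht
  have ht1 : 1 ≤ t := (one_le_div hr0).mpr hrR
  have ht0 : 0 < t := lt_of_lt_of_le one_pos ht1
  set x : ℝ := Real.exp (Real.exp A) * R₀ / r with hx
  have hxt : x = Real.exp (Real.exp A) * t := by rw [hx, ht, mul_div_assoc]
  have hlogx : Real.log x = Real.exp A + Real.log t := by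
    rw [hxt, Real.log_mul (Real.exp_ne_zero _) (ne_of_gt ht0), Real.log_exp]
  have hlogt0 : 0 ≤ Real.log t := Real.log_nonneg ht1
  have hexpA_le : Real.exp A ≤ Real.log x := by rw [hlogx]; linarith
  have hlogx0 : 0 < Real.log x := lt_of_lt_of_le (Real.exp_pos _) hexpA_le
  set L : ℝ := Real.log (Real.log x) with hL
  have hAL : A ≤ L := by
    calc A = Real.log (Real.exp A) := (Real.log_exp A).symm
    _ ≤ L := Real.log_le_log (Real.exp_pos _) hexpA_le
  have hL1 : 1 < L := lt_of_lt_of_le hA1 hAL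
  have hL0 : 0 < L := lt_trans one_pos hL1
  have hLα : (0:ℝ) < L ^ (-α) := Real.rpow_pos_of_pos hL0 _
  -- the key identities
  have hω : omegaMod ϑ α R₀ r = ϑ⁻¹ * L ^ (-α) := rfl
  have hτω : τ * omegaMod ϑ α R₀ r = (τ / ϑ) * L ^ (-α) := by
    rw [hω]; field_simp
  have hτωpos : 0 < τ * omegaMod ϑ α R₀ r := by
    rw [hτω]; positivity
  have hexpkey : (τ * omegaMod ϑ α R₀ r) ^ (-1 / α) = B * L := by
    rw [hτω, Real.mul_rpow hτϑ.le hLα.le, ← Real.rpow_mul hL0.le]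
    have : -α * (-1 / α) = 1 := by field_simp
    rw [this, Real.rpow_one, hB]
  have hωt : omegaTilde τ ϑ α R₀ r = (τ / ϑ) * L ^ (-α) * Real.exp (-(B * L)) := by
    rw [omegaTilde, hexpkey, hτω]
  have hωtpos : 0 < omegaTilde τ ϑ α R₀ r := by rw [hωt]; positivity
  -- expand the rpow
  have hsplit : omegaTilde τ ϑ α R₀ r ^ (1 - p)
      = C₀ * L ^ (α * (p - 1)) * Real.exp ((p - 1) * (B * L)) := by
    rw [hωt, Real.mul_rpow (by positivity) (Real.exp_pos _).le,
      Real.mul_rpow hτϑ.le hLα.le, ← Real.rpow_mul hL0.le, ← Real.exp_mul]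
    have h1 : -α * (1 - p) = α * (p - 1) := by ring
    have h2 : -(B * L) * (1 - p) = (p - 1) * (B * L) := by ring
    rw [h1, h2, hC₀]
  rw [hsplit]
  have hLexp : L ≤ Real.exp L := by
    have := Real.add_one_le_exp L; linarith
  have hexpL : Real.exp L = Real.log x := Real.exp_log hlogx0
  -- step 1 : L ^ (α (p-1)) ≤ (log x) ^ (p-1)
  have hstep1 : L ^ (α * (p - 1)) ≤ Real.log x ^ (p - 1) := by
    calc L ^ (α * (p - 1)) ≤ L ^ (p - 1) := by
          apply Real.rpow_le_rpow_of_exponent_le hL1.le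
          nlinarith
    _ ≤ Real.exp L ^ (p - 1) := Real.rpow_le_rpow hL0.le hLexp (by linarith)
    _ = Real.log x ^ (p - 1) := by rw [hexpL]
  -- step 2 : exp((p-1) B L) = (log x) ^ ((p-1) B)
  have hstep2 : Real.exp ((p - 1) * (B * L)) = Real.log x ^ ((p - 1) * B) := by
    rw [← hexpL, ← Real.exp_mul]
    ring_nf
  -- combine
  have hcomb : C₀ * L ^ (α * (p - 1)) * Real.exp ((p - 1) * (B * L))
      ≤ C₀ * Real.log x ^ K := by
    rw [hstep2]
    calc C₀ * L ^ (α * (p - 1)) * Real.log x ^ ((p - 1) * B)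
        ≤ C₀ * Real.log x ^ (p - 1) * Real.log x ^ ((p - 1) * B) := by
          apply mul_le_mul_of_nonneg_right _ (Real.rpow_nonneg hlogx0.le _)
          exact mul_le_mul_of_nonneg_left hstep1 hC₀0.le
    _ = C₀ * Real.log x ^ K := by
          rw [mul_assoc, ← Real.rpow_add hlogx0]
          congr 1
          rw [hK]; ring
  -- step 3 : log x ≤ D * t ^ ε
  have htε1 : 1 ≤ t ^ ε := Real.one_le_rpow ht1 hε0.le
  have hlogt : Real.log t ≤ ε⁻¹ * t ^ ε := by
    have h1 : Real.log (t ^ ε) ≤ t ^ ε := by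
      have := Real.log_le_sub_one_of_pos (x := t ^ ε) (by positivity)
      linarith
    have h2 : Real.log (t ^ ε) = ε * Real.log t := Real.log_rpow ht0 ε
    rw [h2] at h1
    calc Real.log t = ε⁻¹ * (ε * Real.log t) := by field_simp
    _ ≤ ε⁻¹ * t ^ ε := mul_le_mul_of_nonneg_left h1 (inv_pos.mpr hε0).le
  have hlogxD : Real.log x ≤ D * t ^ ε := by
    have hexpA : Real.exp A ≤ Real.exp A * t ^ ε :=
      le_mul_of_one_le_right (Real.exp_pos _).le htε1
    rw [hlogx, hD]
    calc Real.exp A + Real.log t ≤ Real.exp A * t ^ ε + ε⁻¹ * t ^ ε := by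
          exact add_le_add hexpA hlogt
    _ = (Real.exp A + ε⁻¹) * t ^ ε := by ring
  -- step 4 : (log x)^K ≤ D^K * t^(p γ)
  have hstep4 : Real.log x ^ K ≤ D ^ K * t ^ (p * γ) := by
    calc Real.log x ^ K ≤ (D * t ^ ε) ^ K :=
          Real.rpow_le_rpow hlogx0.le hlogxD hK0.le
    _ = D ^ K * (t ^ ε) ^ K := Real.mul_rpow hD0.le (by positivity)
    _ = D ^ K * t ^ (ε * K) := by rw [← Real.rpow_mul ht0.le]
    _ = D ^ K * t ^ (p * γ) := by
          congr 1
          rw [hε]; field_simp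
  calc C₀ * L ^ (α * (p - 1)) * Real.exp ((p - 1) * (B * L))
      ≤ C₀ * Real.log x ^ K := hcomb
  _ ≤ C₀ * (D ^ K * t ^ (p * γ)) := mul_le_mul_of_nonneg_left hstep4 hC₀0.le
  _ = C₀ * D ^ K * t ^ (p * γ) := by ring
  _ ≤ max 1 (C₀ * D ^ K) * t ^ (p * γ) := by
        exact mul_le_mul_of_nonneg_right (le_max_right _ _) (Real.rpow_nonneg ht0.le _)
end
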